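/- Let k ≥ 3 and let λ_1 < λ_2 < ⋯ < λ_k be real numbers; take indices cyclically modulo k and write d_i = λ_{i+1} − λ_i and s_i = λ_{i+1} + λ_i. Set S₁ = Σ 1/d_i, S₂ = Σ s_i/d_i, S₃ = Σ s_i²/d_i, T₂ = Σ (2 + s_i)/d_i, T₃ = Σ (2 + s_i)²/d_i and U = Σ s_i·(2 + s_i)/d_i. Then S₁ > 0, S₃ > 0, T₃ > 0, S₂² < S₁·S₃, T₂² < S₁·T₃, U² < S₃·T₃, and the angle-addition identity arccos(S₂/√(S₁·S₃)) = arccos(T₂/√(S₁·T₃)) + arccos(U/√(S₃·T₃)) holds. -/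

import Mathlib

open Finset Real

private lemma sum_cube_lt (m : ℕ) (hm : 2 ≤ m) (e : ℕ → ℝ)
    (he : ∀ n ∈ Finset.range m, 0 < e n) :
    ∑ n ∈ Finset.range m, (e n)^3 < (∑ n ∈ Finset.range m, e n)^3 := by
  have hne : (Finset.range m).Nonempty := ⟨0, by simp; omega⟩
  have hlt : ∀ n ∈ Finset.range m, e n < ∑ j ∈ Finset.range m, e j := by
    intro n hn
    refine Finset.single_lt_sum (i := n) (j := if n = 0 then 1 else 0) ?_ hn ?_ ?_ ?_
    · split <;> omega
    · simp; split <;> omega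
    · split <;> exact he _ (by simp; omega)
    · intro j hj _; exact (he j hj).le
  calc ∑ n ∈ Finset.range m, (e n)^3
      < ∑ n ∈ Finset.range m, e n * (∑ j ∈ Finset.range m, e j)^2 := by
        refine Finset.sum_lt_sum_of_nonempty hne ?_
        intro n hn
        have h1 := he n hn
        have h2 := hlt n hn
        have : (e n)^2 < (∑ j ∈ Finset.range m, e j)^2 :=
          pow_lt_pow_left₀ h2 h1.le (by norm_num)
        nlinarith
    _ = (∑ n ∈ Finset.range m, e n)^3 := by rw [← Finset.sum_mul]; ring

private lemma core (m : ℕ) (hm : 2 ≤ m) (F : ℕ → ℝ) (hF : ∀ n < m, F n < F (n+1))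
    (a b : ℝ) (hab : a ≠ 0 ∨ b ≠ 0) :
    0 < (∑ n ∈ Finset.range m, (a + b * (F (n+1) + F n))^2 / (F (n+1) - F n))
        + (a + b * (F 0 + F m))^2 / (F 0 - F m) := by
  set e : ℕ → ℝ := fun n => F (n+1) - F n with he_def
  have he : ∀ n ∈ Finset.range m, 0 < e n := fun n hn =>
    sub_pos.2 (hF n (Finset.mem_range.1 hn))
  set B : ℕ → ℝ := fun n => (b * F (n+1)^2 + a * F (n+1)) - (b * F n^2 + a * F n) with hB_def
  have hsum_e : ∑ n ∈ Finset.range m, e n = F m - F 0 := Finset.sum_range_sub F m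
  have hsum_B : ∑ n ∈ Finset.range m, B n
      = (b * F m^2 + a * F m) - (b * F 0^2 + a * F 0) :=
    Finset.sum_range_sub (fun n => b * F n^2 + a * F n) m
  have hD : 0 < F m - F 0 := by
    rw [← hsum_e]; exact Finset.sum_pos he ⟨0, by simp; omega⟩
  -- rewrite terms
  have hterm : ∀ n ∈ Finset.range m,
      (a + b * (F (n+1) + F n))^2 / (F (n+1) - F n) = (B n)^2 / (e n)^3 := by
    intro n hn
    have h := (he n hn).ne'
    have hBn : B n = (a + b * (F (n+1) + F n)) * e n := by
      simp only [hB_def, he_def]; ring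
    rw [hBn, he_def]
    field_simp
  rw [Finset.sum_congr rfl hterm]
  have hlast : (a + b * (F 0 + F m))^2 / (F 0 - F m)
      = -((∑ n ∈ Finset.range m, B n)^2 / (F m - F 0)^3) := by
    have hc : (∑ n ∈ Finset.range m, B n) = (a + b * (F 0 + F m)) * (F m - F 0) := by
      rw [hsum_B]; ring
    rw [hc]
    have h := hD.ne'
    have h2 : F 0 - F m ≠ 0 := by intro hh; exact h (by linarith)
    field_simp
    ring
  rw [hlast]
  have hEngel : (∑ n ∈ Finset.range m, B n)^2 / (∑ n ∈ Finset.range m, (e n)^3)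
      ≤ ∑ n ∈ Finset.range m, (B n)^2 / (e n)^3 :=
    Finset.sq_sum_div_le_sum_sq_div _ B (fun n hn => pow_pos (he n hn) 3)
  have hcube : ∑ n ∈ Finset.range m, (e n)^3 < (F m - F 0)^3 := by
    rw [← hsum_e]; exact sum_cube_lt m hm e he
  have hcubepos : 0 < ∑ n ∈ Finset.range m, (e n)^3 :=
    Finset.sum_pos (fun n hn => pow_pos (he n hn) 3) ⟨0, by simp; omega⟩
  by_cases hSB : ∑ n ∈ Finset.range m, B n = 0
  · rw [hSB]
    norm_num
    -- 0 < ∑ B² / e³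
    have hBne : B 0 ≠ 0 ∨ B 1 ≠ 0 := by
      by_contra h
      push_neg at h
      obtain ⟨hb0, hb1⟩ := h
      have h0m : (0:ℕ) ∈ Finset.range m := by simp; omega
      have h1m : (1:ℕ) ∈ Finset.range m := by simp; omega
      have hc0 : a + b * (F 1 + F 0) = 0 := by
        have hBn : B 0 = (a + b * (F 1 + F 0)) * e 0 := by
          simp only [hB_def, he_def]; ring
        have := (he 0 h0m).ne'
        rw [hBn] at hb0
        rcases mul_eq_zero.1 hb0 with h | h
        · exact h
        · exact absurd h this
      have hc1 : a + b * (F 2 + F 1) = 0 := by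
        have hBn : B 1 = (a + b * (F 2 + F 1)) * e 1 := by
          simp only [hB_def, he_def]; ring
        have := (he 1 h1m).ne'
        rw [hBn] at hb1
        rcases mul_eq_zero.1 hb1 with h | h
        · exact h
        · exact absurd h this
      have h01 : F 0 < F 1 := hF 0 (by omega)
      have h12 : F 1 < F 2 := hF 1 (by omega)
      have hb : b = 0 := by nlinarith
      have ha : a = 0 := by nlinarith
      rcases hab with h | h <;> contradiction
    refine Finset.sum_pos' (fun n hn => div_nonneg (sq_nonneg _) (pow_pos (he n hn) 3).le) ?_
    rcases hBne with h | h
    · exact ⟨0, by simp; omega, div_pos ((sq_nonneg _).lt_of_ne (Ne.symm (pow_ne_zero 2 h)))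
        (pow_pos (he 0 (by simp; omega)) 3)⟩
    · exact ⟨1, by simp; omega, div_pos ((sq_nonneg _).lt_of_ne (Ne.symm (pow_ne_zero 2 h)))
        (pow_pos (he 1 (by simp; omega)) 3)⟩
  · have hSB2 : 0 < (∑ n ∈ Finset.range m, B n)^2 :=
      (sq_nonneg _).lt_of_ne (Ne.symm (pow_ne_zero 2 hSB))
    have h1 : (∑ n ∈ Finset.range m, B n)^2 / (F m - F 0)^3
        < (∑ n ∈ Finset.range m, B n)^2 / (∑ n ∈ Finset.range m, (e n)^3) :=
      div_lt_div_of_pos_left hSB2 hcubepos hcube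
    linarith

private lemma keyFin {k : ℕ} (hk : 3 ≤ k) (lam : Fin k → ℝ) (hmono : StrictMono lam)
    (a b : ℝ) (hab : a ≠ 0 ∨ b ≠ 0) :
    0 < ∑ i : Fin k, (a + b * (lam (i + ⟨1, (by omega : 2 ≤ k)⟩) + lam i))^2
        / (lam (i + ⟨1, (by omega : 2 ≤ k)⟩) - lam i) := by
  have hk0 : 0 < k := by omega
  set F : ℕ → ℝ := fun n => lam ⟨n % k, Nat.mod_lt n hk0⟩ with hF_def
  have hlam : ∀ i : Fin k, lam i = F i.val := by
    intro i
    exact (congrArg lam (Fin.ext (Nat.mod_eq_of_lt i.isLt))).symm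
  have hsucc : ∀ i : Fin k, lam (i + ⟨1, (by omega : 2 ≤ k)⟩) = F (i.val + 1) := by
    intro i
    apply congrArg lam
    apply Fin.ext
    simp [Fin.add_def]
  have hrw : (∑ i : Fin k, (a + b * (lam (i + ⟨1, (by omega : 2 ≤ k)⟩) + lam i))^2
        / (lam (i + ⟨1, (by omega : 2 ≤ k)⟩) - lam i))
      = ∑ n ∈ Finset.range k, (a + b * (F (n+1) + F n))^2 / (F (n+1) - F n) := by
    rw [← Fin.sum_univ_eq_sum_range (fun n => (a + b * (F (n+1) + F n))^2 / (F (n+1) - F n)) k]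
    exact Finset.sum_congr rfl (fun i _ => by rw [hlam i, hsucc i])
  rw [hrw]
  obtain ⟨m, rfl⟩ : ∃ m, k = m + 1 := ⟨k - 1, by omega⟩
  rw [Finset.sum_range_succ]
  have hFm : F (m + 1) = F 0 := by
    apply congrArg lam
    apply Fin.ext
    simp
  rw [hFm]
  have hF : ∀ n < m, F n < F (n+1) := by
    intro n hn
    apply hmono
    show (⟨n % (m+1), _⟩ : Fin (m+1)) < ⟨(n+1) % (m+1), _⟩
    rw [Fin.mk_lt_mk, Nat.mod_eq_of_lt (by omega), Nat.mod_eq_of_lt (by omega)]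
    omega
  exact core m (by omega) F hF a b hab
set_option maxHeartbeats 2000000 in
/-- For `k ≥ 3` and `λ_1 < ⋯ < λ_k`, with cyclic `d_i = λ_{i+1} - λ_i`,
`s_i = λ_{i+1} + λ_i`, and the quantities `S₁ = ∑ 1/d_i`, `S₂ = ∑ s_i/d_i`,
`S₃ = ∑ s_i²/d_i`, `T₂ = ∑ (2+s_i)/d_i`, `T₃ = ∑ (2+s_i)²/d_i`,
`U = ∑ s_i(2+s_i)/d_i`: all the stated positivity and strict Cauchy–Schwarz
inequalities hold, and the angle-addition identity
`arccos(S₂/√(S₁S₃)) = arccos(T₂/√(S₁T₃)) + arccos(U/√(S₃T₃))` holds. -/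
theorem cyclic_angle_addition
    (k : ℕ) (hk : 3 ≤ k) (lam : Fin k → ℝ) (hmono : StrictMono lam)
    (d s : Fin k → ℝ)
    (hd : ∀ i, d i = lam (i + ⟨1, by omega⟩) - lam i)
    (hs : ∀ i, s i = lam (i + ⟨1, by omega⟩) + lam i)
    (S₁ S₂ S₃ T₂ T₃ U : ℝ)
    (hS₁ : S₁ = ∑ i : Fin k, 1 / d i)
    (hS₂ : S₂ = ∑ i : Fin k, s i / d i)
    (hS₃ : S₃ = ∑ i : Fin k, (s i) ^ 2 / d i)
    (hT₂ : T₂ = ∑ i : Fin k, (2 + s i) / d i)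
    (hT₃ : T₃ = ∑ i : Fin k, (2 + s i) ^ 2 / d i)
    (hU : U = ∑ i : Fin k, s i * (2 + s i) / d i) :
    0 < S₁ ∧ 0 < S₃ ∧ 0 < T₃ ∧
      S₂ ^ 2 < S₁ * S₃ ∧ T₂ ^ 2 < S₁ * T₃ ∧ U ^ 2 < S₃ * T₃ ∧
      Real.arccos (S₂ / Real.sqrt (S₁ * S₃)) =
        Real.arccos (T₂ / Real.sqrt (S₁ * T₃)) +
          Real.arccos (U / Real.sqrt (S₃ * T₃)) := by
  -- d i is never zero
  have hdne : ∀ i : Fin k, d i ≠ 0 := by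
    intro i
    rw [hd i]
    refine sub_ne_zero_of_ne (fun h => ?_)
    have h2 := congrArg Fin.val (hmono.injective h)
    rw [Fin.add_def] at h2
    simp at h2
    rcases Nat.lt_or_ge (i.val + 1) k with hlt | hge
    · rw [Nat.mod_eq_of_lt hlt] at h2; omega
    · have hik : i.val + 1 = k := by have := i.isLt; omega
      rw [hik, Nat.mod_self] at h2
      have := i.isLt; omega
  -- the quadratic form is positive definite
  have hQ : ∀ a b : ℝ, (a ≠ 0 ∨ b ≠ 0) → 0 < a^2 * S₁ + 2*a*b*S₂ + b^2*S₃ := by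
    intro a b hab
    have hkey := keyFin hk lam hmono a b hab
    have hsum : (∑ i : Fin k, (a + b * (lam (i + ⟨1, by omega⟩) + lam i))^2
          / (lam (i + ⟨1, by omega⟩) - lam i))
        = ∑ i : Fin k, (a + b * s i)^2 / d i :=
      Finset.sum_congr rfl (fun i _ => by rw [hs i, hd i])
    rw [hsum] at hkey
    have heq : a^2 * S₁ + 2*a*b*S₂ + b^2*S₃ = ∑ i : Fin k, (a + b * s i)^2 / d i := by
      rw [hS₁, hS₂, hS₃, Finset.mul_sum, Finset.mul_sum, Finset.mul_sum,
        ← Finset.sum_add_distrib, ← Finset.sum_add_distrib]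
      refine Finset.sum_congr rfl (fun i _ => ?_)
      have := hdne i
      field_simp
      ring
    rw [heq]
    exact hkey
  have hS₁pos : 0 < S₁ := by
    have := hQ 1 0 (Or.inl one_ne_zero); linarith
  have hS₃pos : 0 < S₃ := by
    have := hQ 0 1 (Or.inr one_ne_zero); linarith
  have hDpos : 0 < S₁ * S₃ - S₂^2 := by
    have h := hQ S₂ (-S₁) (Or.inr (by intro hh; rw [neg_eq_zero] at hh; linarith))
    have heq : S₂^2 * S₁ + 2*S₂*(-S₁)*S₂ + (-S₁)^2*S₃ = S₁ * (S₁ * S₃ - S₂^2) := by ring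
    have h2 : 0 < S₁ * (S₁ * S₃ - S₂^2) := by rw [← heq]; exact h
    rcases mul_pos_iff.1 h2 with ⟨_, hh⟩ | ⟨hh, _⟩
    · exact hh
    · linarith
  -- linear relations
  have hT₂' : T₂ = 2*S₁ + S₂ := by
    rw [hT₂, hS₁, hS₂, Finset.mul_sum, ← Finset.sum_add_distrib]
    refine Finset.sum_congr rfl (fun i _ => ?_)
    rw [mul_one_div, ← add_div]
  have hT₃' : T₃ = 4*S₁ + 4*S₂ + S₃ := by
    rw [hT₃, hS₁, hS₂, hS₃, Finset.mul_sum, Finset.mul_sum,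
      ← Finset.sum_add_distrib, ← Finset.sum_add_distrib]
    refine Finset.sum_congr rfl (fun i _ => ?_)
    have := hdne i
    field_simp
    ring
  have hU' : U = 2*S₂ + S₃ := by
    rw [hU, hS₂, hS₃, Finset.mul_sum, ← Finset.sum_add_distrib]
    refine Finset.sum_congr rfl (fun i _ => ?_)
    have := hdne i
    field_simp
  have hT₃pos : 0 < T₃ := by
    have := hQ 2 1 (Or.inr one_ne_zero); rw [hT₃']; linarith
  have hDT : S₁ * T₃ - T₂^2 = S₁ * S₃ - S₂^2 := by rw [hT₂', hT₃']; ring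
  have hDU : S₃ * T₃ - U^2 = 4 * (S₁ * S₃ - S₂^2) := by rw [hU', hT₃']; ring
  have hI1 : S₂^2 < S₁ * S₃ := by linarith
  have hI2 : T₂^2 < S₁ * T₃ := by linarith
  have hI3 : U^2 < S₃ * T₃ := by linarith
  refine ⟨hS₁pos, hS₃pos, hT₃pos, hI1, hI2, hI3, ?_⟩
  -- now the arccos identity
  set p := Real.sqrt S₁ with hp_def
  set q := Real.sqrt S₃ with hq_def
  set t := Real.sqrt T₃ with ht_def
  set sd := Real.sqrt (S₁ * S₃ - S₂^2) with hsd_def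
  have hppos : 0 < p := Real.sqrt_pos.2 hS₁pos
  have hqpos : 0 < q := Real.sqrt_pos.2 hS₃pos
  have htpos : 0 < t := Real.sqrt_pos.2 hT₃pos
  have hsdpos : 0 < sd := Real.sqrt_pos.2 hDpos
  have hp2 : p^2 = S₁ := Real.sq_sqrt hS₁pos.le
  have hq2 : q^2 = S₃ := Real.sq_sqrt hS₃pos.le
  have ht2 : t^2 = T₃ := Real.sq_sqrt hT₃pos.le
  have hsd2 : sd^2 = S₁ * S₃ - S₂^2 := Real.sq_sqrt hDpos.le
  have hr1 : Real.sqrt (S₁ * S₃) = p * q := Real.sqrt_mul hS₁pos.le S₃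
  have hr2 : Real.sqrt (S₁ * T₃) = p * t := Real.sqrt_mul hS₁pos.le T₃
  have hr3 : Real.sqrt (S₃ * T₃) = q * t := Real.sqrt_mul hS₃pos.le T₃
  rw [hr1, hr2, hr3]
  set β := Real.arccos (T₂ / (p * t)) with hβ_def
  set γ := Real.arccos (U / (q * t)) with hγ_def
  -- bounds on the cosines
  have hyabs : |T₂| < p * t := by
    have h := Real.sqrt_lt_sqrt (sq_nonneg T₂) hI2
    rwa [Real.sqrt_sq_eq_abs, hr2] at h
  have hzabs : |U| < q * t := by
    have h := Real.sqrt_lt_sqrt (sq_nonneg U) hI3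
    rwa [Real.sqrt_sq_eq_abs, hr3] at h
  have hptpos : 0 < p * t := mul_pos hppos htpos
  have hqtpos : 0 < q * t := mul_pos hqpos htpos
  have hy1 : -1 ≤ T₂ / (p * t) := by
    rw [le_div_iff₀ hptpos]
    have := abs_lt.1 hyabs
    linarith
  have hy2 : T₂ / (p * t) ≤ 1 := by
    rw [div_le_one hptpos]
    have := abs_lt.1 hyabs
    linarith
  have hz1 : -1 ≤ U / (q * t) := by
    rw [le_div_iff₀ hqtpos]
    have := abs_lt.1 hzabs
    linarith
  have hz2 : U / (q * t) ≤ 1 := by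
    rw [div_le_one hqtpos]
    have := abs_lt.1 hzabs
    linarith
  have hcosβ : Real.cos β = T₂ / (p * t) := Real.cos_arccos hy1 hy2
  have hcosγ : Real.cos γ = U / (q * t) := Real.cos_arccos hz1 hz2
  -- sines
  have hsinβ : Real.sin β = sd / (p * t) := by
    rw [hβ_def, Real.sin_arccos]
    have h1 : 1 - (T₂ / (p * t))^2 = (S₁ * S₃ - S₂^2) / (S₁ * T₃) := by
      rw [div_pow, mul_pow, hp2, ht2]
      have hne : S₁ * T₃ ≠ 0 := by positivity
      field_simp
      linarith
    rw [h1, Real.sqrt_div hDpos.le, hr2, hsd_def]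
  have hsinγ : Real.sin γ = 2 * sd / (q * t) := by
    rw [hγ_def, Real.sin_arccos]
    have h1 : 1 - (U / (q * t))^2 = (4 * (S₁ * S₃ - S₂^2)) / (S₃ * T₃) := by
      rw [div_pow, mul_pow, hq2, ht2]
      have hne : S₃ * T₃ ≠ 0 := by positivity
      field_simp
      linarith
    rw [h1, Real.sqrt_div (by linarith) , hr3]
    congr 1
    rw [show (4 : ℝ) * (S₁ * S₃ - S₂^2) = 2^2 * (S₁ * S₃ - S₂^2) by norm_num,
      Real.sqrt_mul (by norm_num), Real.sqrt_sq (by norm_num), hsd_def]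
  -- β + γ ≤ π
  have hβmem : β ∈ Set.Icc 0 Real.pi := ⟨Real.arccos_nonneg _, Real.arccos_le_pi _⟩
  have hγmem : γ ∈ Set.Icc 0 Real.pi := ⟨Real.arccos_nonneg _, Real.arccos_le_pi _⟩
  have hyz : 0 < T₂ / (p * t) + U / (q * t) := by
    have hS₂lb : -(p * q) < S₂ := by
      have h := Real.sqrt_lt_sqrt (sq_nonneg S₂) hI1
      rw [Real.sqrt_sq_eq_abs, hr1] at h
      have := abs_lt.1 h
      linarith
    have hnum : 0 < T₂ * q + U * p := by
      rw [hT₂', hU']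
      have e1 : 0 < q + 2 * p := by linarith
      have factored : (2*S₁+S₂)*q + (2*S₂+S₃)*p = (S₂ + p*q)*(q + 2*p) := by
        rw [← hp2, ← hq2]; ring
      calc (0:ℝ) < (S₂ + p*q)*(q + 2*p) := mul_pos (by linarith) e1
        _ = (2*S₁+S₂)*q + (2*S₂+S₃)*p := factored.symm
    have : T₂ / (p * t) + U / (q * t) = (T₂ * q + U * p) / (p * q * t) := by
      field_simp
    rw [this]
    positivity
  have hsumle : β + γ ≤ Real.pi := by
    have hπγmem : Real.pi - γ ∈ Set.Icc 0 Real.pi := by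
      constructor <;> [linarith [hγmem.2]; linarith [hγmem.1]]
    have hcoslt : Real.cos (Real.pi - γ) < Real.cos β := by
      rw [Real.cos_pi_sub, hcosβ, hcosγ]
      linarith
    have := (Real.strictAntiOn_cos.lt_iff_gt hπγmem hβmem).1 hcoslt
    linarith
  have hsumnn : 0 ≤ β + γ := by linarith [hβmem.1, hγmem.1]
  -- cos(β+γ) = S₂ / (p q)
  have hcosadd : Real.cos (β + γ) = S₂ / (p * q) := by
    rw [Real.cos_add, hcosβ, hcosγ, hsinβ, hsinγ]
    have key : T₂ * U - 2 * sd^2 = S₂ * t^2 := by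
      rw [hsd2, ht2, hT₂', hU', hT₃']; ring
    have hpne := hppos.ne'
    have hqne := hqpos.ne'
    have htne := htpos.ne'
    field_simp
    linear_combination key
  rw [← hcosadd, Real.arccos_cos hsumnn hsumle]
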